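/- Let Z be a measurable space, D a probability measure on Z, and f : W × Z → ℝ a loss function (W a measurable parameter space) such that all integrals below exist. Let A : Z^n × Θ → W be a (randomized) learning algorithm, where (Θ, μ_Θ) is a probability space modeling the algorithm's internal randomness. Suppose A is ε-uniformly stable, i.e., for every pair of datasets S, S' ∈ Z^n that differ in at most one coordinate and every z ∈ Z, ∫_Θ (f(A(S,θ); z) − f(A(S',θ); z)) dμ_Θ(θ) ≤ ε. Then the expected generalization error is bounded by ε: ∫_{Z^n} ∫_Θ ( ∫_Z f(A(S,θ); z) dD(z) − (1/n) Σ_{i=1}^n f(A(S,θ); z_i) ) dμ_Θ(θ) dD^n(S) ≤ ε, where S = (z_1, …, z_n) and D^n is the n-fold product measure of D. -/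

import Mathlib

open MeasureTheory

private lemma updMP {Z : Type*} [MeasurableSpace Z] (D : Measure Z) [IsProbabilityMeasure D]
    {m : ℕ} (i : Fin (m + 1)) :
    MeasurePreserving (fun p : (Fin (m + 1) → Z) × Z => (Function.update p.1 i p.2, p.1 i))
      ((Measure.pi fun _ : Fin (m + 1) => D).prod D)
      ((Measure.pi fun _ : Fin (m + 1) => D).prod D) := by
  classical
  set σ : Equiv.Perm (Fin (m + 2)) := Equiv.swap (Fin.castSucc i) (Fin.last (m + 1)) with hσ
  have h1 : MeasurePreserving (Prod.swap : (Fin (m+1) → Z) × Z → Z × (Fin (m+1) → Z))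
      ((Measure.pi fun _ : Fin (m+1) => D).prod D)
      (D.prod (Measure.pi fun _ : Fin (m+1) => D)) := Measure.measurePreserving_swap
  have h2 := (measurePreserving_piFinSuccAbove (fun _ : Fin (m+2) => D) (Fin.last (m+1))).symm
    (MeasurableEquiv.piFinSuccAbove (fun _ : Fin (m+2) => Z) (Fin.last (m+1)))
  have h3 := measurePreserving_piCongrLeft (fun _ : Fin (m+2) => D) σ
  have h4 := measurePreserving_piFinSuccAbove (fun _ : Fin (m+2) => D) (Fin.last (m+1))
  have h5 : MeasurePreserving (Prod.swap : Z × (Fin (m+1) → Z) → (Fin (m+1) → Z) × Z)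
      (D.prod (Measure.pi fun _ : Fin (m+1) => D))
      ((Measure.pi fun _ : Fin (m+1) => D).prod D) := Measure.measurePreserving_swap
  have hcomp := h5.comp (h4.comp (h3.comp (h2.comp h1)))
  have heq : (fun p : (Fin (m + 1) → Z) × Z => (Function.update p.1 i p.2, p.1 i))
      = ((Prod.swap : Z × (Fin (m+1) → Z) → (Fin (m+1) → Z) × Z) ∘
        (MeasurableEquiv.piFinSuccAbove (fun _ : Fin (m+2) => Z) (Fin.last (m+1))) ∘
        (MeasurableEquiv.piCongrLeft (fun _ : Fin (m+2) => Z) σ) ∘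
        (MeasurableEquiv.piFinSuccAbove (fun _ : Fin (m+2) => Z) (Fin.last (m+1))).symm ∘
        (Prod.swap : (Fin (m+1) → Z) × Z → Z × (Fin (m+1) → Z))) := by
    funext p
    obtain ⟨S, z⟩ := p
    simp only [Function.comp_apply, Prod.swap_prod_mk,
      MeasurableEquiv.piFinSuccAbove_symm_apply, MeasurableEquiv.piFinSuccAbove_apply,
      Fin.removeNth]
    have hg : ∀ a, (MeasurableEquiv.piCongrLeft (fun _ : Fin (m+2) => Z) σ)
        ((Fin.last (m+1)).insertNth z S) a
        = (Fin.insertNth (α := fun _ : Fin (m+2) => Z) (Fin.last (m+1)) z S) (σ a) := by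
      intro a
      conv_lhs => rw [show a = σ (σ a) by simp [hσ]]
      rw [MeasurableEquiv.piCongrLeft_apply_apply]
    refine Prod.ext ?_ ?_
    · funext j
      show Function.update S i z j
        = (MeasurableEquiv.piCongrLeft (fun _ : Fin (m+2) => Z) σ)
            ((Fin.last (m+1)).insertNth z S) ((Fin.last (m+1)).succAbove j)
      rw [hg, Fin.succAbove_last]
      by_cases hji : j = i
      · subst hji
        rw [hσ, Equiv.swap_apply_left]
        simp
      · rw [hσ, Equiv.swap_apply_of_ne_of_ne
          (by simpa using (Fin.castSucc_injective _).ne hji)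
          (Fin.ne_of_lt (Fin.castSucc_lt_last j))]
        rw [← Fin.succAbove_last, Fin.insertNth_apply_succAbove]
        simp [Function.update_of_ne hji]
    · show S i
        = (MeasurableEquiv.piCongrLeft (fun _ : Fin (m+2) => Z) σ)
            ((Fin.last (m+1)).insertNth z S) (Fin.last (m+1))
      rw [hg, hσ, Equiv.swap_apply_right, ← Fin.succAbove_last,
        Fin.insertNth_apply_succAbove]
  rw [heq]; exact hcomp

/-- Uniform stability implies generalization in expectation. -/
theorem stmt_0 {Z Θ W : Type*} [MeasurableSpace Z] [MeasurableSpace Θ]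
    (D : Measure Z) [IsProbabilityMeasure D]
    (μΘ : Measure Θ) [IsProbabilityMeasure μΘ]
    (n : ℕ) (hn : 0 < n)
    (f : W → Z → ℝ)
    (A : (Fin n → Z) → Θ → W)
    (ε : ℝ)
    (hInt : Integrable
      (fun q : ((Fin n → Z) × Θ) × Z => f (A q.1.1 q.1.2) q.2)
      (((Measure.pi fun _ : Fin n => D).prod μΘ).prod D))
    (hInt2 : ∀ i : Fin n, Integrable
      (fun q : (Fin n → Z) × Θ => f (A q.1 q.2) (q.1 i))
      ((Measure.pi fun _ : Fin n => D).prod μΘ))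
    (hstab : ∀ S S' : Fin n → Z, (∃ j, ∀ i, i ≠ j → S i = S' i) →
      ∀ z : Z, ∫ θ, (f (A S θ) z - f (A S' θ) z) ∂μΘ ≤ ε) :
    ∫ S, (∫ θ, ((∫ z, f (A S θ) z ∂D) - (1 / (n : ℝ)) * ∑ i, f (A S θ) (S i)) ∂μΘ)
      ∂(Measure.pi fun _ : Fin n => D) ≤ ε := by
  classical
  obtain ⟨m, rfl⟩ := Nat.exists_eq_succ_of_ne_zero hn.ne'
  set P : Measure (Fin (m + 1) → Z) := Measure.pi fun _ => D with hP
  haveI : IsProbabilityMeasure P := by rw [hP]; infer_instance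
  -- the key estimate, one index at a time
  have key : ∀ i : Fin (m + 1),
      (∫ q, (∫ z, f (A q.1 q.2) z ∂D) ∂(P.prod μΘ))
        - ∫ q, f (A q.1 q.2) (q.1 i) ∂(P.prod μΘ) ≤ ε := by
    intro i
    have hT := updMP D i
    have hTid : MeasurePreserving
        (Prod.map (fun p : (Fin (m+1) → Z) × Z => (Function.update p.1 i p.2, p.1 i)) id)
        ((P.prod D).prod μΘ) ((P.prod D).prod μΘ) := hT.prod (MeasurePreserving.id μΘ)
    have he : MeasurePreserving
        (fun q : ((Fin (m+1) → Z) × Z) × Θ => ((q.1.1, q.2), q.1.2))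
        ((P.prod D).prod μΘ) ((P.prod μΘ).prod D) := by
      have a1 := measurePreserving_prodAssoc P D μΘ
      have a2 : MeasurePreserving (Prod.map (id : (Fin (m+1) → Z) → _) Prod.swap)
          (P.prod (D.prod μΘ)) (P.prod (μΘ.prod D)) :=
        (MeasurePreserving.id P).prod Measure.measurePreserving_swap
      have a3 := (measurePreserving_prodAssoc P μΘ D).symm MeasurableEquiv.prodAssoc
      exact ((a3.comp a2).comp a1 : _)
    have hF1 : Integrable (fun q : ((Fin (m+1) → Z) × Z) × Θ => f (A q.1.1 q.2) q.1.2)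
        ((P.prod D).prod μΘ) := by
      have := (he.integrable_comp hInt.aestronglyMeasurable).mpr hInt
      exact this
    have hF2 : Integrable
        (fun q : ((Fin (m+1) → Z) × Z) × Θ =>
          f (A (Function.update q.1.1 i q.1.2) q.2) (q.1.1 i)) ((P.prod D).prod μΘ) := by
      have := (hTid.integrable_comp hF1.aestronglyMeasurable).mpr hF1
      exact this
    have hmfst : MeasurePreserving (Prod.fst : (Fin (m+1) → Z) × Z → _) (P.prod D) P :=
      ⟨measurable_fst, by simp⟩
    have hm : MeasurePreserving
        (fun q : ((Fin (m+1) → Z) × Z) × Θ => (q.1.1, q.2))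
        ((P.prod D).prod μΘ) (P.prod μΘ) := hmfst.prod (MeasurePreserving.id μΘ)
    have hF3 : Integrable (fun q : ((Fin (m+1) → Z) × Z) × Θ => f (A q.1.1 q.2) (q.1.1 i))
        ((P.prod D).prod μΘ) :=
      (hm.integrable_comp (hInt2 i).aestronglyMeasurable).mpr (hInt2 i)
    -- Step A
    have eqA : ∫ q, (∫ z, f (A q.1 q.2) z ∂D) ∂(P.prod μΘ)
        = ∫ p, (∫ θ, f (A p.1 θ) p.2 ∂μΘ) ∂(P.prod D) := by
      rw [← integral_prod _ hInt, ← he.map_eq,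
        integral_map he.aemeasurable (he.map_eq.symm ▸ hInt.aestronglyMeasurable),
        integral_prod _ hF1]
    -- Step B
    have eqB : ∫ p, (∫ θ, f (A p.1 θ) p.2 ∂μΘ) ∂(P.prod D)
        = ∫ p, (∫ θ, f (A (Function.update p.1 i p.2) θ) (p.1 i) ∂μΘ) ∂(P.prod D) := by
      conv_lhs => rw [← hT.map_eq]
      rw [integral_map hT.aemeasurable
        (hT.map_eq.symm ▸ hF1.integral_prod_left.aestronglyMeasurable)]
    -- Step C
    have eqC : ∫ q, f (A q.1 q.2) (q.1 i) ∂(P.prod μΘ)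
        = ∫ p, (∫ θ, f (A p.1 θ) (p.1 i) ∂μΘ) ∂(P.prod D) := by
      rw [← hm.map_eq,
        integral_map hm.aemeasurable (hm.map_eq.symm ▸ (hInt2 i).aestronglyMeasurable),
        integral_prod _ hF3]
    rw [eqA, eqB, eqC, ← integral_sub hF2.integral_prod_left hF3.integral_prod_left]
    have hbound : ∀ᵐ p ∂(P.prod D),
        (∫ θ, f (A (Function.update p.1 i p.2) θ) (p.1 i) ∂μΘ)
          - (∫ θ, f (A p.1 θ) (p.1 i) ∂μΘ) ≤ ε := by
      filter_upwards [hF2.prod_right_ae, hF3.prod_right_ae] with p h2 h3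
      rw [← integral_sub h2 h3]
      exact hstab _ _ ⟨i, fun k hk => Function.update_of_ne hk _ _⟩ _
    calc ∫ p, ((∫ θ, f (A (Function.update p.1 i p.2) θ) (p.1 i) ∂μΘ)
            - (∫ θ, f (A p.1 θ) (p.1 i) ∂μΘ)) ∂(P.prod D)
        ≤ ∫ _, ε ∂(P.prod D) := by
          exact integral_mono_ae
            (hF2.integral_prod_left.sub hF3.integral_prod_left) (integrable_const ε) hbound
      _ = ε := by simp
  -- assemble
  have hI : Integrable (fun q : (Fin (m+1) → Z) × Θ => ∫ z, f (A q.1 q.2) z ∂D)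
      (P.prod μΘ) := hInt.integral_prod_left
  have hsum : Integrable (fun q : (Fin (m+1) → Z) × Θ =>
      (1 / ((m+1 : ℕ) : ℝ)) * ∑ i, f (A q.1 q.2) (q.1 i)) (P.prod μΘ) :=
    (integrable_finset_sum _ fun i _ => hInt2 i).const_mul _
  have h0 : ∫ S, (∫ θ, ((∫ z, f (A S θ) z ∂D)
        - (1 / ((m+1 : ℕ) : ℝ)) * ∑ i, f (A S θ) (S i)) ∂μΘ) ∂P
      = ∫ q, ((∫ z, f (A q.1 q.2) z ∂D)
        - (1 / ((m+1 : ℕ) : ℝ)) * ∑ i, f (A q.1 q.2) (q.1 i)) ∂(P.prod μΘ) :=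
    (integral_prod _ (hI.sub hsum)).symm
  rw [h0, integral_sub hI hsum, integral_const_mul,
    integral_finset_sum _ fun i _ => hInt2 i]
  set a := ∫ q, (∫ z, f (A q.1 q.2) z ∂D) ∂(P.prod μΘ) with ha
  have hNpos : (0:ℝ) < ((m+1 : ℕ) : ℝ) := by positivity
  have : a - (1 / ((m+1 : ℕ) : ℝ)) * ∑ i : Fin (m+1), ∫ q, f (A q.1 q.2) (q.1 i) ∂(P.prod μΘ)
      = (1 / ((m+1 : ℕ) : ℝ)) * ∑ i : Fin (m+1),
        (a - ∫ q, f (A q.1 q.2) (q.1 i) ∂(P.prod μΘ)) := by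
    rw [Finset.sum_sub_distrib, Finset.sum_const, Finset.card_univ, Fintype.card_fin]
    field_simp
    push_cast
    ring
  rw [this]
  calc (1 / ((m+1 : ℕ) : ℝ)) * ∑ i : Fin (m+1),
        (a - ∫ q, f (A q.1 q.2) (q.1 i) ∂(P.prod μΘ))
      ≤ (1 / ((m+1 : ℕ) : ℝ)) * ∑ _i : Fin (m+1), ε := by
        apply mul_le_mul_of_nonneg_left (Finset.sum_le_sum fun i _ => key i)
        positivity
    _ = ε := by
        rw [Finset.sum_const, Finset.card_univ, Fintype.card_fin]
        field_simp
        rw [nsmul_eq_mul]
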